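/- Let e = f' ⊕ g', and let (f,g) be a direct acute basis of Z^2 such that e lies in the open cone {λf + μg : λ, μ > 0}. Then f + g, f', and g' all belong to the closed triangle with vertices e, f, g. -/
import Mathlib

def det2 (f g : ℤ × ℤ) : ℤ := f.1 * g.2 - f.2 * g.1

def ip2 (f g : ℤ × ℤ) : ℤ := f.1 * g.1 + f.2 * g.2

def IsDAB (f g : ℤ × ℤ) : Prop := det2 f g = 1 ∧ 0 ≤ ip2 f g

def toR2 (v : ℤ × ℤ) : ℝ × ℝ := ((v.1 : ℝ), (v.2 : ℝ))

lemma int_sq_one_le (n : ℤ) (h : n ≠ 0) : 1 ≤ n * n := by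
  rcases h.lt_or_gt with h | h <;> nlinarith

lemma mem_triangle (E F G X : ℝ × ℝ) (a b c : ℝ) (ha : 0 ≤ a) (hb : 0 ≤ b) (hc : 0 ≤ c)
    (hpos : 0 < a + b + c) (hX : (a + b + c) • X = a • E + b • F + c • G) :
    X ∈ convexHull ℝ ({E, F, G} : Set (ℝ × ℝ)) := by
  have hDne : a + b + c ≠ 0 := ne_of_gt hpos
  have hXe : X = (a/(a+b+c)) • E + (b/(a+b+c)) • F + (c/(a+b+c)) • G := by
    have h2 : (a+b+c)⁻¹ • ((a+b+c) • X) = (a+b+c)⁻¹ • (a • E + b • F + c • G) := by rw [hX]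
    rw [smul_smul, inv_mul_cancel₀ hDne, one_smul] at h2
    rw [h2, smul_add, smul_add, smul_smul, smul_smul, smul_smul]
    simp [div_eq_inv_mul]
  rw [hXe]
  have hmem : ∀ i : Fin 3, (![E,F,G]) i ∈ ({E, F, G} : Set (ℝ × ℝ)) := by
    intro i; fin_cases i <;> simp
  have := (convex_convexHull ℝ ({E,F,G} : Set (ℝ × ℝ))).sum_mem
    (t := Finset.univ) (w := ![a/(a+b+c), b/(a+b+c), c/(a+b+c)]) (z := ![E,F,G])
    (by intro i _; fin_cases i <;> simp <;> positivity)
    (by simp [Fin.sum_univ_three]; field_simp)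
    (by intro i _; exact subset_convexHull ℝ _ (hmem i))
  simpa [Fin.sum_univ_three] using this

lemma keySigns (p q r s A B C : ℤ) (hdet : p*s - q*r = 1)
    (ha : 1 ≤ p + r) (hb : 1 ≤ q + s) (hA : 1 ≤ A) (hB : 1 ≤ B) (hC : 0 ≤ C)
    (hip : 0 ≤ p*r*A + q*s*B + (p*s + q*r)*C) :
    1 ≤ p ∧ 0 ≤ q ∧ 0 ≤ r ∧ 1 ≤ s := by
  have hq0 : 0 ≤ q := by
    by_contra h
    push_neg at h
    have hq1 : q ≤ -1 := by omega
    have hs2 : 2 ≤ s := by omega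
    rcases le_or_gt r 0 with hr | hr
    · have hp1 : 1 - r ≤ p := by omega
      nlinarith [mul_le_mul hp1 (by omega : 1 - q ≤ s) (by omega : (0:ℤ) ≤ 1 - q) (by omega : (0:ℤ) ≤ p)]
    · have hr1 : 1 ≤ r := hr
      have hqr : q * r ≤ -1 := by nlinarith
      have hps : p * s ≤ 0 := by nlinarith
      have hp0 : p ≤ 0 := by nlinarith
      have h1 : p*r*A ≤ 0 := mul_nonpos_of_nonpos_of_nonneg (by nlinarith) (by omega)
      have h2 : q*s*B ≤ q*s := by
        nlinarith [mul_nonpos_of_nonpos_of_nonneg (show q*s ≤ 0 by nlinarith) (show (0:ℤ) ≤ B - 1 by omega)]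
      have h3 : (p*s+q*r)*C ≤ 0 := mul_nonpos_of_nonpos_of_nonneg (by nlinarith) hC
      nlinarith
  have hr0 : 0 ≤ r := by
    by_contra h
    push_neg at h
    have hr1 : r ≤ -1 := by omega
    have hp2 : 2 ≤ p := by omega
    rcases le_or_gt q 0 with hq | hq
    · nlinarith [mul_le_mul (by omega : 1 - r ≤ p) (by omega : 1 - q ≤ s) (by omega : (0:ℤ) ≤ 1 - q) (by omega : (0:ℤ) ≤ p)]
    · have hq1 : 1 ≤ q := hq
      have hqr : q * r ≤ -1 := by nlinarith
      have hps : p * s ≤ 0 := by nlinarith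
      have hs0 : s ≤ 0 := by nlinarith
      have h1 : p*r*A ≤ p*r := by
        nlinarith [mul_nonpos_of_nonpos_of_nonneg (show p*r ≤ 0 by nlinarith) (show (0:ℤ) ≤ A - 1 by omega)]
      have h2 : q*s*B ≤ 0 := mul_nonpos_of_nonpos_of_nonneg (by nlinarith) (by omega)
      have h3 : (p*s+q*r)*C ≤ 0 := mul_nonpos_of_nonpos_of_nonneg (by nlinarith) hC
      nlinarith
  have hp1 : 1 ≤ p := by
    by_contra h
    push_neg at h
    have hp0 : p ≤ 0 := by omega
    have hqr : 0 ≤ q * r := mul_nonneg hq0 hr0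
    rcases eq_or_lt_of_le hp0 with hp | hp
    · nlinarith
    · have hpm : p ≤ -1 := by omega
      have hsm : s ≤ -1 := by nlinarith
      nlinarith [mul_le_mul (by omega : 1 - s ≤ q) (by omega : 1 - p ≤ r) (by omega : (0:ℤ) ≤ 1 - p) (by omega : (0:ℤ) ≤ q)]
  have hs1 : 1 ≤ s := by
    by_contra h
    push_neg at h
    have hs0 : s ≤ 0 := by omega
    have hqr : 0 ≤ q * r := mul_nonneg hq0 hr0
    nlinarith
  exact ⟨hp1, hq0, hr0, hs1⟩

set_option maxHeartbeats 1000000 in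
/-- If `e = f' ⊕ g'` and `(f,g)` is a direct acute basis with `e` in the open cone
spanned by `f, g`, then `f+g`, `f'`, `g'` belong to the closed triangle `[e, f, g]`. -/
theorem stmt17_parents_in_triangle (e f' g' f g : ℤ × ℤ)
    (hdab' : IsDAB f' g') (he : e = f' + g') (hdab : IsDAB f g)
    (hcone : ∃ lam mu : ℝ, 0 < lam ∧ 0 < mu ∧
      toR2 e = (lam * (f.1 : ℝ) + mu * (g.1 : ℝ), lam * (f.2 : ℝ) + mu * (g.2 : ℝ))) :
    toR2 (f + g) ∈ convexHull ℝ ({toR2 e, toR2 f, toR2 g} : Set (ℝ × ℝ)) ∧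
    toR2 f' ∈ convexHull ℝ ({toR2 e, toR2 f, toR2 g} : Set (ℝ × ℝ)) ∧
    toR2 g' ∈ convexHull ℝ ({toR2 e, toR2 f, toR2 g} : Set (ℝ × ℝ)) := by
  obtain ⟨lam, mu, hlam, hmu, hE⟩ := hcone
  obtain ⟨hd', hip'⟩ := hdab'
  obtain ⟨hd, hip⟩ := hdab
  simp only [det2] at hd hd'
  simp only [ip2] at hip hip'
  obtain ⟨p, q, r, s, hp, hq, hr, hs⟩ :
      ∃ p q r s : ℤ, p = f'.1*g.2 - f'.2*g.1 ∧ q = f.1*f'.2 - f.2*f'.1 ∧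
        r = g'.1*g.2 - g'.2*g.1 ∧ s = f.1*g'.2 - f.2*g'.1 :=
    ⟨_, _, _, _, rfl, rfl, rfl, rfl⟩
  have he1 : e.1 = f'.1 + g'.1 := by rw [he]; rfl
  have he2 : e.2 = f'.2 + g'.2 := by rw [he]; rfl
  -- coordinates in the basis (f, g)
  have hx1 : f'.1 = p * f.1 + q * g.1 := by rw [hp, hq]; linear_combination (-f'.1) * hd
  have hx2 : f'.2 = p * f.2 + q * g.2 := by rw [hp, hq]; linear_combination (-f'.2) * hd
  have hy1 : g'.1 = r * f.1 + s * g.1 := by rw [hr, hs]; linear_combination (-g'.1) * hd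
  have hy2 : g'.2 = r * f.2 + s * g.2 := by rw [hr, hs]; linear_combination (-g'.2) * hd
  have hps : p * s - q * r = 1 := by
    rw [hp, hq, hr, hs]
    linear_combination (f'.1 * g'.2 - f'.2 * g'.1) * hd + hd'
  -- positivity of the cone coordinates of e
  have hE1 : (e.1 : ℝ) = lam * f.1 + mu * g.1 := congrArg Prod.fst hE
  have hE2 : (e.2 : ℝ) = lam * f.2 + mu * g.2 := congrArg Prod.snd hE
  have hdR : (f.1 : ℝ) * g.2 - f.2 * g.1 = 1 := by exact_mod_cast hd
  have hlameq : ((p + r : ℤ) : ℝ) = lam := by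
    have hZ : p + r = e.1 * g.2 - e.2 * g.1 := by rw [hp, hr, he1, he2]; ring
    have hc : ((p + r : ℤ) : ℝ) = (e.1 : ℝ) * g.2 - (e.2 : ℝ) * g.1 := by
      rw [hZ]; push_cast; ring
    rw [hc, hE1, hE2]; linear_combination lam * hdR
  have hmueq : ((q + s : ℤ) : ℝ) = mu := by
    have hZ : q + s = f.1 * e.2 - f.2 * e.1 := by rw [hq, hs, he1, he2]; ring
    have hc : ((q + s : ℤ) : ℝ) = (f.1 : ℝ) * e.2 - (f.2 : ℝ) * e.1 := by
      rw [hZ]; push_cast; ring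
    rw [hc, hE1, hE2]; linear_combination mu * hdR
  have ha : 1 ≤ p + r := by
    have h0 : (0 : ℝ) < ((p + r : ℤ) : ℝ) := by rw [hlameq]; exact hlam
    exact_mod_cast h0
  have hb : 1 ≤ q + s := by
    have h0 : (0 : ℝ) < ((q + s : ℤ) : ℝ) := by rw [hmueq]; exact hmu
    exact_mod_cast h0
  -- Gram data
  have hfne : f.1 ≠ 0 ∨ f.2 ≠ 0 := by
    by_contra h
    push_neg at h
    rw [h.1, h.2] at hd; simp at hd
  have hgne : g.1 ≠ 0 ∨ g.2 ≠ 0 := by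
    by_contra h
    push_neg at h
    rw [h.1, h.2] at hd; simp at hd
  have hA : 1 ≤ f.1 * f.1 + f.2 * f.2 := by
    rcases hfne with h | h
    · nlinarith [int_sq_one_le f.1 h, sq_nonneg f.2]
    · nlinarith [int_sq_one_le f.2 h, sq_nonneg f.1]
  have hB : 1 ≤ g.1 * g.1 + g.2 * g.2 := by
    rcases hgne with h | h
    · nlinarith [int_sq_one_le g.1 h, sq_nonneg g.2]
    · nlinarith [int_sq_one_le g.2 h, sq_nonneg g.1]
  have hipc : 0 ≤ p*r*(f.1*f.1+f.2*f.2) + q*s*(g.1*g.1+g.2*g.2)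
      + (p*s + q*r)*(f.1*g.1+f.2*g.2) := by
    have hexp : f'.1 * g'.1 + f'.2 * g'.2 = p*r*(f.1*f.1+f.2*f.2) + q*s*(g.1*g.1+g.2*g.2)
        + (p*s + q*r)*(f.1*g.1+f.2*g.2) := by rw [hx1, hx2, hy1, hy2]; ring
    linarith [hip', hexp.symm.le]
  obtain ⟨hp1, hq0, hr0, hs1⟩ := keySigns p q r s _ _ _ hps ha hb hA hB hip hipc
  -- real versions of the structural identities
  have hx1R : (f'.1 : ℝ) = p * f.1 + q * g.1 := by exact_mod_cast congrArg (Int.cast : ℤ → ℝ) hx1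
  have hx2R : (f'.2 : ℝ) = p * f.2 + q * g.2 := by exact_mod_cast congrArg (Int.cast : ℤ → ℝ) hx2
  have hy1R : (g'.1 : ℝ) = r * f.1 + s * g.1 := by exact_mod_cast congrArg (Int.cast : ℤ → ℝ) hy1
  have hy2R : (g'.2 : ℝ) = r * f.2 + s * g.2 := by exact_mod_cast congrArg (Int.cast : ℤ → ℝ) hy2
  have he1R : (e.1 : ℝ) = (f'.1 : ℝ) + (g'.1 : ℝ) := by exact_mod_cast congrArg (Int.cast : ℤ → ℝ) he1
  have he2R : (e.2 : ℝ) = (f'.2 : ℝ) + (g'.2 : ℝ) := by exact_mod_cast congrArg (Int.cast : ℤ → ℝ) he2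
  have hpsR : (p : ℝ) * s - q * r = 1 := by exact_mod_cast hps
  have hpR : (1 : ℝ) ≤ (p : ℝ) := by exact_mod_cast hp1
  have hqR : (0 : ℝ) ≤ (q : ℝ) := by exact_mod_cast hq0
  have hrR : (0 : ℝ) ≤ (r : ℝ) := by exact_mod_cast hr0
  have hsR : (1 : ℝ) ≤ (s : ℝ) := by exact_mod_cast hs1
  have haR : (1 : ℝ) ≤ (p : ℝ) + r := by exact_mod_cast ha
  have hbR : (1 : ℝ) ≤ (q : ℝ) + s := by exact_mod_cast hb
  refine ⟨?_, ?_, ?_⟩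
  · refine mem_triangle (toR2 e) (toR2 f) (toR2 g) (toR2 (f+g))
      1 ((q : ℝ) + s - 1) ((p : ℝ) + r - 1)
      (by norm_num) (by linarith) (by linarith) (by linarith) ?_
    simp only [toR2, Prod.ext_iff, Prod.smul_fst, Prod.smul_snd, Prod.fst_add, Prod.snd_add,
      smul_eq_mul]
    constructor
    · push_cast
      rw [he1R, hx1R, hy1R]; ring
    · push_cast
      rw [he2R, hx2R, hy2R]; ring
  · refine mem_triangle (toR2 e) (toR2 f) (toR2 g) (toR2 f')
      ((p : ℝ) + q - 1) ((r : ℝ) + 1) ((s : ℝ) - 1)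
      (by linarith) (by linarith) (by linarith) (by linarith) ?_
    simp only [toR2, Prod.ext_iff, Prod.smul_fst, Prod.smul_snd, Prod.fst_add, Prod.snd_add,
      smul_eq_mul]
    constructor
    · rw [he1R, hx1R, hy1R]; linear_combination ((f.1 : ℝ) - g.1) * hpsR
    · rw [he2R, hx2R, hy2R]; linear_combination ((f.2 : ℝ) - g.2) * hpsR
  · refine mem_triangle (toR2 e) (toR2 f) (toR2 g) (toR2 g')
      ((r : ℝ) + s - 1) ((p : ℝ) - 1) ((q : ℝ) + 1)
      (by linarith) (by linarith) (by linarith) (by linarith) ?_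
    simp only [toR2, Prod.ext_iff, Prod.smul_fst, Prod.smul_snd, Prod.fst_add, Prod.snd_add,
      smul_eq_mul]
    constructor
    · rw [he1R, hx1R, hy1R]; linear_combination ((g.1 : ℝ) - f.1) * hpsR
    · rw [he2R, hx2R, hy2R]; linear_combination ((g.2 : ℝ) - f.2) * hpsR
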